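/- Let (d, r) be an arithmetical structure on the cycle C_n and let p = lcm(r_1, ..., r_n). If r̃_0 is a positive integer such that p divides r̃_0 and r̃_0 divides r_1 + ... + r_n, then (r̃_0, r_1, ..., r_n) is an arithmetical r-structure on the wheel graph W_n. -/
import Mathlib


/-- Predecessor of cycle vertex `i` in the cycle `v_1, …, v_n`. -/
def cyclePrev (n i : ℕ) : ℕ := if i = 1 then n else i - 1

/-- Successor of cycle vertex `i` in the cycle `v_1, …, v_n`. -/
def cycleNext (n i : ℕ) : ℕ := if i = n then 1 else i + 1

/-- `(d, r)` is an arithmetical structure on the wheel graph `W_n`, whose hub `v_0`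
is indexed by `0` and whose cycle vertices `v_1, …, v_n` are indexed by `1, …, n`. -/
def IsWheelArithStructure (n : ℕ) (d r : ℕ → ℕ) : Prop :=
  (∀ i ≤ n, 0 < d i) ∧ (∀ i ≤ n, 0 < r i) ∧
  (Finset.range (n + 1)).gcd r = 1 ∧
  d 0 * r 0 = ∑ i ∈ Finset.Icc 1 n, r i ∧
  ∀ i, 1 ≤ i → i ≤ n → d i * r i = r 0 + r (cyclePrev n i) + r (cycleNext n i)

/-- An arithmetical `r`-structure on the wheel graph `W_n`, via the divisibility relations. -/
def IsWheelRStructure (n : ℕ) (r : ℕ → ℕ) : Prop :=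
  (∀ i ≤ n, 0 < r i) ∧ (Finset.range (n + 1)).gcd r = 1 ∧
  r 0 ∣ ∑ i ∈ Finset.Icc 1 n, r i ∧
  ∀ i, 1 ≤ i → i ≤ n → r i ∣ r 0 + r (cyclePrev n i) + r (cycleNext n i)

/-- `(d, r)` is an arithmetical structure on the cycle `C_n`. -/
def IsCycleArithStructure (n : ℕ) (d r : ℕ → ℕ) : Prop :=
  (∀ i, 1 ≤ i → i ≤ n → 0 < d i) ∧ (∀ i, 1 ≤ i → i ≤ n → 0 < r i) ∧
  (Finset.Icc 1 n).gcd r = 1 ∧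
  ∀ i, 1 ≤ i → i ≤ n → d i * r i = r (cyclePrev n i) + r (cycleNext n i)

/-- If `(d, r)` is an arithmetical structure on `C_n`, `p = lcm(r 1, …, r n)` divides
`r̃ 0` and `r̃ 0` divides `r 1 + ⋯ + r n`, then `(r̃ 0, r 1, …, r n)` is an
arithmetical r-structure on `W_n`. -/
theorem wheel_rStructure_from_cycle (n : ℕ) (hn : 3 ≤ n) (d r : ℕ → ℕ)
    (h : IsCycleArithStructure n d r) (r0 : ℕ) (hr0 : 0 < r0)
    (hlcm : (Finset.Icc 1 n).lcm r ∣ r0)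
    (hdvd : r0 ∣ ∑ i ∈ Finset.Icc 1 n, r i) :
    IsWheelRStructure n (fun i => if i = 0 then r0 else r i) := by
  obtain ⟨hd, hr, hgcd, hrel⟩ := h
  have hins : Finset.range (n + 1) = insert 0 (Finset.Icc 1 n) := by
    ext x
    simp [Finset.mem_range, Nat.lt_succ_iff, Nat.one_le_iff_ne_zero]
    omega
  refine ⟨?_, ?_, ?_, ?_⟩
  · intro i hi
    by_cases h0 : i = 0
    · simp [h0, hr0]
    · simp only [h0, if_neg]
      exact hr i (Nat.one_le_iff_ne_zero.mpr h0) hi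
  · rw [hins, Finset.gcd_insert]
    simp only [if_pos rfl]
    have heq : (Finset.Icc 1 n).gcd (fun i => if i = 0 then r0 else r i)
        = (Finset.Icc 1 n).gcd r := by
      apply Finset.gcd_congr rfl
      intro x hx
      simp only [Finset.mem_Icc] at hx
      simp [show x ≠ 0 by omega]
    rw [heq, hgcd]
    simp
  · simp only [if_pos rfl]
    have : ∑ i ∈ Finset.Icc 1 n, (if i = 0 then r0 else r i) = ∑ i ∈ Finset.Icc 1 n, r i := by
      apply Finset.sum_congr rfl
      intro x hx
      simp only [Finset.mem_Icc] at hx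
      simp [show x ≠ 0 by omega]
    rw [this]; exact hdvd
  · intro i hi1 hin
    have hprev : cyclePrev n i ≠ 0 := by unfold cyclePrev; split <;> omega
    have hnext : cycleNext n i ≠ 0 := by unfold cycleNext; split <;> omega
    simp only [if_neg hprev, if_neg hnext, if_neg (show i ≠ 0 by omega), if_pos rfl]
    have h1 : r i ∣ r0 := dvd_trans (Finset.dvd_lcm (by simp [Finset.mem_Icc]; omega)) hlcm
    have h2 : r i ∣ r (cyclePrev n i) + r (cycleNext n i) :=
      ⟨d i, by rw [← hrel i hi1 hin]; ring⟩
    simpa [add_assoc] using Nat.dvd_add h1 h2
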